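/- Let m ≥ 1, sizes d : Fin m → ℕ with d i ≥ 1, tensors Z, 𝒢 : (∀ i, Fin (d i)) → ℝ, and ε > 0. For each mode i and slice index k ∈ Fin (d i), let S i k := ∑_{x : x i = k} (𝒢 x)² (the squared ℓ₂-norm of the k-th row of the mode-i unfolding of 𝒢), let g i k := ε + S i k, and let V := max over all i and k ∈ Fin (d i) of S i k (so V = ‖𝒢‖∨² in the paper's notation). Define the weighted squared norm ‖Z‖²_𝒲 := ∑_x (∏ i, (g i (x i)) ^ (1/(2m))) * (Z x)² (real rpow). Then √ε · (∑_x (Z x)²) ≤ ‖Z‖²_𝒲 ≤ √(ε + V) · (∑_x (Z x)²). -/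

import Mathlib

/-- **Lemma 4.2 (norm equivalence).**  The preconditioned norm `‖·‖_𝒲` satisfies
`√ε ‖Z‖_F² ≤ ‖Z‖²_𝒲 ≤ √(ε + ‖𝒢‖∨²) ‖Z‖_F²`. -/
theorem weighted_norm_equivalence
    {m : ℕ} (hm : 1 ≤ m) (d : Fin m → ℕ) (hd : ∀ i, 1 ≤ d i)
    (Z G : ((i : Fin m) → Fin (d i)) → ℝ) (ε : ℝ) (hε : 0 < ε)
    (S : (i : Fin m) → Fin (d i) → ℝ)
    (hS : ∀ (i : Fin m) (k : Fin (d i)),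
      S i k = ∑ x ∈ Finset.univ.filter (fun x : (j : Fin m) → Fin (d j) => x i = k), (G x) ^ 2)
    (g : (i : Fin m) → Fin (d i) → ℝ)
    (hg : ∀ (i : Fin m) (k : Fin (d i)), g i k = ε + S i k)
    (V : ℝ) (hV : IsGreatest {v : ℝ | ∃ (i : Fin m) (k : Fin (d i)), v = S i k} V) :
    Real.sqrt ε * (∑ x, (Z x) ^ 2) ≤
        (∑ x, (∏ i, (g i (x i)) ^ ((1 : ℝ) / (2 * (m : ℝ)))) * (Z x) ^ 2) ∧
      (∑ x, (∏ i, (g i (x i)) ^ ((1 : ℝ) / (2 * (m : ℝ)))) * (Z x) ^ 2) ≤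
        Real.sqrt (ε + V) * (∑ x, (Z x) ^ 2) := by
  have hm' : (0 : ℝ) < m := by exact_mod_cast Nat.lt_of_lt_of_le Nat.zero_lt_one hm
  have hexp : (0 : ℝ) ≤ 1 / (2 * (m : ℝ)) := by positivity
  have hSnn : ∀ (i : Fin m) (k : Fin (d i)), 0 ≤ S i k := by
    intro i k; rw [hS]; positivity
  have hVnn : 0 ≤ V := by
    obtain ⟨i, k, hik⟩ := hV.1
    exact hik ▸ hSnn i k
  have hgb : ∀ (i : Fin m) (k : Fin (d i)), ε ≤ g i k ∧ g i k ≤ ε + V := by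
    intro i k
    rw [hg]
    exact ⟨le_add_of_nonneg_right (hSnn i k),
      add_le_add_right (hV.2 ⟨i, k, rfl⟩) ε⟩
  have key : ∀ (c : ℝ), 0 ≤ c → (∏ _i : Fin m, c ^ ((1 : ℝ) / (2 * (m : ℝ)))) = Real.sqrt c := by
    intro c hc
    rw [Finset.prod_const, Finset.card_univ, Fintype.card_fin, ← Real.rpow_natCast _ m,
      ← Real.rpow_mul hc]
    rw [show (1 : ℝ) / (2 * (m : ℝ)) * m = 1 / 2 by field_simp]
    exact (Real.sqrt_eq_rpow c).symm
  constructor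
  · rw [Finset.mul_sum]
    refine Finset.sum_le_sum fun x _ => ?_
    refine mul_le_mul_of_nonneg_right ?_ (sq_nonneg _)
    rw [← key ε hε.le]
    exact Finset.prod_le_prod (fun i _ => Real.rpow_nonneg hε.le _)
      (fun i _ => Real.rpow_le_rpow hε.le (hgb i (x i)).1 hexp)
  · rw [Finset.mul_sum]
    refine Finset.sum_le_sum fun x _ => ?_
    refine mul_le_mul_of_nonneg_right ?_ (sq_nonneg _)
    rw [← key (ε + V) (by linarith)]
    exact Finset.prod_le_prod
      (fun i _ => Real.rpow_nonneg (le_trans hε.le (hgb i (x i)).1) _)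
      (fun i _ => Real.rpow_le_rpow (le_trans hε.le (hgb i (x i)).1) (hgb i (x i)).2 hexp)
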